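/- Let G(p) be a framework in ℝ^r. Suppose there exists a framework G(q) in ℝ^r with q^i = A p^i + b for all i (A an r×r matrix, b ∈ ℝ^r) that is equivalent to G(p), i.e. ‖q^i − q^j‖ = ‖p^i − p^j‖ for all edges (i,j), but not congruent to G(p). Then the vectors p^i − p^j for (i,j) ∈ E(G) lie on a quadratic at infinity, i.e., there is a nonzero symmetric r×r matrix Φ with (p^i − p^j)ᵀ Φ (p^i − p^j) = 0 for all edges (i,j). Conversely, if such a nonzero Φ exists, then there exists such an affinely-equivalent but non-congruent framework G(q). -/

import Mathlib

open Matrix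
open scoped MatrixOrder

lemma dp_norm {r : ℕ} (x : EuclideanSpace ℝ (Fin r)) : (x : Fin r → ℝ) ⬝ᵥ (x : Fin r → ℝ) = ‖x‖^2 := by
  rw [← real_inner_self_eq_norm_sq]
  simp [dotProduct, PiLp.inner_apply, RCLike.inner_apply]
  rw [EuclideanSpace.real_norm_sq_eq]; simp [pow_two]

lemma norm_toEuclideanLin {r : ℕ} (A : Matrix (Fin r) (Fin r) ℝ) (x : EuclideanSpace ℝ (Fin r)) :
    ‖Matrix.toEuclideanLin A x‖^2 = (x : Fin r → ℝ) ⬝ᵥ ((Aᵀ*A) *ᵥ x) := by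
  rw [← dp_norm]
  show (A *ᵥ x) ⬝ᵥ (A *ᵥ x) = _
  rw [← Matrix.mulVec_mulVec, Matrix.dotProduct_mulVec x Aᵀ, Matrix.vecMul_transpose]

lemma dist_sq_affine {r : ℕ} (A : Matrix (Fin r) (Fin r) ℝ) (b u v : EuclideanSpace ℝ (Fin r)) :
    dist (Matrix.toEuclideanLin A u + b) (Matrix.toEuclideanLin A v + b) ^ 2
      = dist u v ^ 2 +
        (fun k => u k - v k) ⬝ᵥ ((Aᵀ*A - 1) *ᵥ (fun k => u k - v k)) := by
  have hw : (fun k => u k - v k) = ((u - v : EuclideanSpace ℝ (Fin r)) : Fin r → ℝ) := by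
    ext k; simp
  rw [hw, dist_eq_norm, dist_eq_norm, add_sub_add_right_eq_sub, ← map_sub,
    norm_toEuclideanLin, ← dp_norm, Matrix.sub_mulVec, dotProduct_sub,
    Matrix.one_mulVec]
  have h3 : ∀ x : Fin r → ℝ, x ⬝ᵥ ((u - v : EuclideanSpace ℝ (Fin r)) : Fin r → ℝ)
      = x ⬝ᵥ (u : Fin r → ℝ) - x ⬝ᵥ (v : Fin r → ℝ) := by
    intro x; simp [dotProduct, mul_sub, Finset.sum_sub_distrib]
  ring

lemma phi_eq_zero {n r : ℕ} (p : Fin n → EuclideanSpace ℝ (Fin r))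
    (hspan : affineSpan ℝ (Set.range p) = ⊤) (Φ : Matrix (Fin r) (Fin r) ℝ) (hsymm : Φ.IsSymm)
    (h : ∀ i j, (fun k => p i k - p j k) ⬝ᵥ Φ.mulVec (fun k => p i k - p j k) = 0) :
    Φ = 0 := by
  -- the range is nonempty
  have hne : (Set.range p).Nonempty := by
    by_contra hc
    rw [Set.not_nonempty_iff_eq_empty] at hc
    rw [hc, AffineSubspace.span_empty] at hspan
    exact absurd hspan (by simp [← AffineSubspace.nonempty_iff_ne_bot])
  obtain ⟨-, i0, rfl⟩ := hne
  have hQ : ∀ i j, ((p i : Fin r → ℝ) - (p j : Fin r → ℝ)) ⬝ᵥ Φ *ᵥ ((p i : Fin r → ℝ) - (p j : Fin r → ℝ)) = 0 := by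
    intro i j
    have := h i j
    convert this using 2
    all_goals rfl
  have hBsym : ∀ u v : Fin r → ℝ, v ⬝ᵥ Φ *ᵥ u = u ⬝ᵥ Φ *ᵥ v := by
    intro u v
    rw [Matrix.dotProduct_mulVec, ← Matrix.mulVec_transpose, hsymm.eq, dotProduct_comm]
  have hgen : ∀ i j, ((p i : Fin r → ℝ) - (p i0 : Fin r → ℝ)) ⬝ᵥ Φ *ᵥ ((p j : Fin r → ℝ) - (p i0 : Fin r → ℝ)) = 0 := by
    intro i j
    have hpol := hQ i j
    have e1 : ((p i : Fin r → ℝ) - (p j : Fin r → ℝ)) = ((p i : Fin r → ℝ) - (p i0 : Fin r → ℝ)) - ((p j : Fin r → ℝ) - (p i0 : Fin r → ℝ)) := by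
      abel
    rw [e1] at hpol
    rw [Matrix.mulVec_sub, sub_dotProduct, dotProduct_sub,
      dotProduct_sub] at hpol
    have h1 := hQ i i0
    have h2 := hQ j i0
    have h3 := hBsym ((p i : Fin r → ℝ) - (p i0 : Fin r → ℝ)) ((p j : Fin r → ℝ) - (p i0 : Fin r → ℝ))
    linarith
  -- spanning
  have hv : vectorSpan ℝ (Set.range p) = ⊤ := by
    rw [← direction_affineSpan, hspan, AffineSubspace.direction_top]
  have hs : Submodule.span ℝ ((· -ᵥ p i0) '' Set.range p) = ⊤ := by
    rw [← vectorSpan_eq_span_vsub_set_right ℝ (Set.mem_range_self i0), hv]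
  have main : ∀ x y : EuclideanSpace ℝ (Fin r), (x : Fin r → ℝ) ⬝ᵥ Φ *ᵥ (y : Fin r → ℝ) = 0 := by
    intro x y
    have hx : x ∈ Submodule.span ℝ ((· -ᵥ p i0) '' Set.range p) := by rw [hs]; trivial
    have hy : y ∈ Submodule.span ℝ ((· -ᵥ p i0) '' Set.range p) := by rw [hs]; trivial
    induction hx, hy using Submodule.span_induction₂ with
    | mem_mem u v hu hv =>
      obtain ⟨-, ⟨i, rfl⟩, rfl⟩ := hu
      obtain ⟨-, ⟨j, rfl⟩, rfl⟩ := hv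
      exact hgen i j
    | zero_left v hv => simp
    | zero_right u hu => simp
    | add_left u u' v hu hu' hv h1 h2 =>
      show ((u : Fin r → ℝ) + (u' : Fin r → ℝ)) ⬝ᵥ Φ *ᵥ (v : Fin r → ℝ) = 0
      rw [add_dotProduct, h1, h2, add_zero]
    | add_right u v v' hu hv hv' h1 h2 =>
      show (u : Fin r → ℝ) ⬝ᵥ Φ *ᵥ ((v : Fin r → ℝ) + (v' : Fin r → ℝ)) = 0
      rw [Matrix.mulVec_add, dotProduct_add, h1, h2, add_zero]
    | smul_left c u v hu hv h1 =>
      show (c • (u : Fin r → ℝ)) ⬝ᵥ Φ *ᵥ (v : Fin r → ℝ) = 0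
      rw [smul_dotProduct, h1, smul_zero]
    | smul_right c u v hu hv h1 =>
      show (u : Fin r → ℝ) ⬝ᵥ Φ *ᵥ (c • (v : Fin r → ℝ)) = 0
      rw [Matrix.mulVec_smul, dotProduct_smul, h1, smul_zero]
  ext a b
  have := main (WithLp.toLp 2 (Pi.single a 1)) (WithLp.toLp 2 (Pi.single b 1))
  simpa [Matrix.mulVec_single, single_dotProduct] using this

lemma quad_bound {r : ℕ} (Φ : Matrix (Fin r) (Fin r) ℝ) (x : Fin r → ℝ) :
    |x ⬝ᵥ Φ *ᵥ x| ≤ (∑ a, ∑ b, |Φ a b|) * (x ⬝ᵥ x) := by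
  have hxx : ∀ a b, |x a| * |x b| ≤ x ⬝ᵥ x := by
    intro a b
    have hs : ∀ c, x c ^ 2 ≤ x ⬝ᵥ x := by
      intro c
      have : x c * x c ≤ ∑ i, x i * x i :=
        Finset.single_le_sum (f := fun i => x i * x i) (fun i _ => mul_self_nonneg _)
          (Finset.mem_univ c)
      simpa [dotProduct, pow_two] using this
    have h1 : |x a| ≤ Real.sqrt (x ⬝ᵥ x) := Real.abs_le_sqrt (hs a)
    have h2 : |x b| ≤ Real.sqrt (x ⬝ᵥ x) := Real.abs_le_sqrt (hs b)
    calc |x a| * |x b| ≤ Real.sqrt (x ⬝ᵥ x) * Real.sqrt (x ⬝ᵥ x) :=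
          mul_le_mul h1 h2 (abs_nonneg _) (Real.sqrt_nonneg _)
      _ = x ⬝ᵥ x := Real.mul_self_sqrt (Finset.sum_nonneg fun i _ => mul_self_nonneg (x i))
  calc |x ⬝ᵥ Φ *ᵥ x| = |∑ a, ∑ b, x a * (Φ a b * x b)| := by
        simp [dotProduct, mulVec, Finset.mul_sum]
    _ ≤ ∑ a, ∑ b, |x a * (Φ a b * x b)| := by
        refine (Finset.abs_sum_le_sum_abs _ _).trans ?_
        exact Finset.sum_le_sum fun a _ => Finset.abs_sum_le_sum_abs _ _
    _ ≤ ∑ a, ∑ b, |Φ a b| * (x ⬝ᵥ x) := by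
        refine Finset.sum_le_sum fun a _ => Finset.sum_le_sum fun b _ => ?_
        rw [abs_mul, abs_mul]
        calc |x a| * (|Φ a b| * |x b|) = |Φ a b| * (|x a| * |x b|) := by ring
          _ ≤ |Φ a b| * (x ⬝ᵥ x) := by
              exact mul_le_mul_of_nonneg_left (hxx a b) (abs_nonneg _)
    _ = (∑ a, ∑ b, |Φ a b|) * (x ⬝ᵥ x) := by rw [Finset.sum_mul]; congr 1; ext a; rw [Finset.sum_mul]

lemma posdef_one_add_smul {r : ℕ} (Φ : Matrix (Fin r) (Fin r) ℝ) (hsymm : Φ.IsSymm)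
    {t : ℝ} (ht : 0 < t) (htC : t * (∑ a, ∑ b, |Φ a b|) < 1) :
    (1 + t • Φ).PosDef := by
  rw [Matrix.posDef_iff_dotProduct_mulVec]
  constructor
  · rw [Matrix.IsHermitian, conjTranspose_eq_transpose_of_trivial, Matrix.transpose_add,
      Matrix.transpose_one, Matrix.transpose_smul, hsymm.eq]
  · intro x hx
    have hnn : 0 ≤ x ⬝ᵥ x := Finset.sum_nonneg fun i _ => mul_self_nonneg (x i)
    have hxx : 0 < x ⬝ᵥ x :=
      lt_of_le_of_ne hnn fun h => hx (dotProduct_self_eq_zero.mp h.symm)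
    have hb := abs_le.mp (quad_bound Φ x)
    have hexp : star x ⬝ᵥ ((1 + t • Φ) *ᵥ x) = x ⬝ᵥ x + t * (x ⬝ᵥ Φ *ᵥ x) := by
      rw [star_trivial, Matrix.add_mulVec, Matrix.one_mulVec, Matrix.smul_mulVec,
        dotProduct_add, dotProduct_smul]
      simp
    rw [hexp]
    nlinarith [hb.1, hb.2, hxx, htC, ht, mul_pos ht hxx]

lemma dist_of_sq_eq {X : Type*} [MetricSpace X] {a b c d : X}
    (h : dist a b ^ 2 = dist c d ^ 2) : dist a b = dist c d := by
  rw [← Real.sqrt_sq (dist_nonneg (x := a) (y := b)), h,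
    Real.sqrt_sq (dist_nonneg (x := c) (y := d))]

theorem affine_flex_iff_quadric_at_infinity {n r : ℕ}
    (G : SimpleGraph (Fin n)) (p : Fin n → EuclideanSpace ℝ (Fin r))
    (hspan : affineSpan ℝ (Set.range p) = ⊤) :
    (∃ (q : Fin n → EuclideanSpace ℝ (Fin r)) (A : Matrix (Fin r) (Fin r) ℝ)
        (b : EuclideanSpace ℝ (Fin r)),
      (∀ i, q i = Matrix.toEuclideanLin A (p i) + b) ∧
      (∀ i j, G.Adj i j → dist (q i) (q j) = dist (p i) (p j)) ∧
      ¬ (∀ i j, dist (q i) (q j) = dist (p i) (p j))) ↔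
    (∃ Φ : Matrix (Fin r) (Fin r) ℝ, Φ ≠ 0 ∧ Φ.IsSymm ∧
      ∀ i j, G.Adj i j →
        (fun k => p i k - p j k) ⬝ᵥ Φ.mulVec (fun k => p i k - p j k) = 0) := by
  constructor
  · rintro ⟨q, A, b, hq, hedge, hncong⟩
    have hd : ∀ i j, dist (q i) (q j) ^ 2 = dist (p i) (p j) ^ 2 +
        (fun k => p i k - p j k) ⬝ᵥ ((Aᵀ*A - 1) *ᵥ (fun k => p i k - p j k)) := by
      intro i j
      rw [hq i, hq j]
      exact dist_sq_affine A b (p i) (p j)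
    refine ⟨Aᵀ*A - 1, ?_, ?_, ?_⟩
    · intro h0
      apply hncong
      intro i j
      have h1 := hd i j
      rw [h0, Matrix.zero_mulVec, dotProduct_zero, add_zero] at h1
      exact dist_of_sq_eq h1
    · rw [Matrix.IsSymm, Matrix.transpose_sub, Matrix.transpose_mul,
        Matrix.transpose_transpose, Matrix.transpose_one]
    · intro i j hadj
      have h1 := hedge i j hadj
      have h2 := hd i j
      rw [h1] at h2
      linarith
  · rintro ⟨Φ, hne, hsym, hedge⟩
    set C := ∑ a, ∑ b, |Φ a b| with hCdef
    have hC : 0 ≤ C := Finset.sum_nonneg fun a _ => Finset.sum_nonneg fun b _ => abs_nonneg _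
    set t := (1+C)⁻¹ with htdef
    have ht : 0 < t := inv_pos.mpr (by linarith)
    have htC : t * C < 1 := by
      have h1 : t * C < t * (1 + C) := by
        apply mul_lt_mul_of_pos_left _ ht
        linarith
      have h2 : t * (1 + C) = 1 := inv_mul_cancel₀ (by linarith)
      linarith
    have hM := posdef_one_add_smul Φ hsym ht htC
    set A := CFC.sqrt (1 + t • Φ) with hA
    have hAH : A.IsHermitian := (Matrix.nonneg_iff_posSemidef.mp (CFC.sqrt_nonneg _)).1
    have hAt : Aᵀ = A := by
      rw [← Matrix.conjTranspose_eq_transpose_of_trivial]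
      exact hAH
    have hAA : Aᵀ * A - 1 = t • Φ := by
      rw [hAt, CFC.sqrt_mul_sqrt_self _ (Matrix.nonneg_iff_posSemidef.mpr hM.posSemidef)]
      exact add_sub_cancel_left 1 (t • Φ)
    have hd : ∀ i j, dist (Matrix.toEuclideanLin A (p i) + 0) (Matrix.toEuclideanLin A (p j) + 0) ^ 2
        = dist (p i) (p j) ^ 2 +
          t * ((fun k => p i k - p j k) ⬝ᵥ Φ *ᵥ (fun k => p i k - p j k)) := by
      intro i j
      rw [dist_sq_affine, hAA, Matrix.smul_mulVec, dotProduct_smul]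
      simp [smul_eq_mul]
    refine ⟨fun i => Matrix.toEuclideanLin A (p i) + 0, A, 0, fun i => rfl, ?_, ?_⟩
    · intro i j hadj
      show dist (Matrix.toEuclideanLin A (p i) + 0) (Matrix.toEuclideanLin A (p j) + 0)
        = dist (p i) (p j)
      apply dist_of_sq_eq
      rw [hd i j, hedge i j hadj, mul_zero, add_zero]
    · intro hall
      apply hne
      apply phi_eq_zero p hspan Φ hsym
      intro i j
      have h1 := hd i j
      have h0 : dist (Matrix.toEuclideanLin A (p i) + 0) (Matrix.toEuclideanLin A (p j) + 0)
          = dist (p i) (p j) := hall i j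
      rw [h0] at h1
      have h2 : t * ((fun k => p i k - p j k) ⬝ᵥ Φ *ᵥ (fun k => p i k - p j k)) = 0 := by
        linarith
      exact (mul_eq_zero.mp h2).resolve_left (ne_of_gt ht)
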